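/- Let (r_α)_{α>0} be a generator of a regularisation method, and assume there exist an increasing function φ : (0,∞) → (0,∞), constants μ ∈ (0,1) and A > 0 such that φ(λ)·ṙ_α(λ)^μ ≤ A·φ(α) for all λ > 0 and all α > 0. If there exists C̃ > 0 with e(λ) ≤ C̃·φ(λ) for all λ > 0, then there exists C > 0 (explicitly C = (A^{1/μ}/φ(‖L‖²))·‖x†‖² + C̃ + A·C̃·ρ̃^{1−μ}/(1−μ)) such that ‖x_α(y) − x†‖² ≤ C·φ(α) for all α > 0. (Second implication of Proposition 2.4.) -/

import Mathlib

open MeasureTheory RealInnerProductSpace Filter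

lemma stieltjes_measure_le {e : StieltjesFunction ℝ} (he0 : e 0 = 0) {S : Set ℝ} {b K : ℝ}
    (hK : 0 ≤ K) (hS : S ⊆ Set.Ioc 0 b) (hbound : ∀ t ∈ S, e t ≤ K) :
    e.measure S ≤ ENNReal.ofReal K := by
  rcases S.eq_empty_or_nonempty with hE | hne
  · simp [hE]
  have hbdd : BddAbove S := ⟨b, fun x hx => (hS hx).2⟩
  set u := sSup S with hu
  obtain ⟨x0, hx0⟩ := id hne
  have hx0S := hS hx0
  have hu0 : 0 < u := lt_of_lt_of_le hx0S.1 (le_csSup hbdd hx0)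
  by_cases hcase : e u ≤ K
  · calc e.measure S ≤ e.measure (Set.Ioc 0 u) := by
          apply measure_mono
          intro x hx
          exact ⟨(hS hx).1, le_csSup hbdd hx⟩
      _ = ENNReal.ofReal (e u - e 0) := e.measure_Ioc 0 u
      _ ≤ ENNReal.ofReal K := by
          apply ENNReal.ofReal_le_ofReal; rw [he0]; linarith
  · have huS : u ∉ S := fun h => hcase (hbound u h)
    have hsub : S ⊆ Set.Ioo 0 u := by
      intro x hx
      refine ⟨(hS hx).1, lt_of_le_of_ne (le_csSup hbdd hx) ?_⟩
      rintro rfl; exact huS hx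
    have hll : Function.leftLim e u ≤ K := by
      have := e.mono.tendsto_leftLim u
      apply le_of_tendsto this
      filter_upwards [self_mem_nhdsWithin] with t ht
      obtain ⟨x, hxS, hxt⟩ := exists_lt_of_lt_csSup hne ht
      exact le_trans (e.mono hxt.le) (hbound x hxS)
    calc e.measure S ≤ e.measure (Set.Ioo 0 u) := measure_mono hsub
      _ = ENNReal.ofReal (Function.leftLim e u - e 0) := e.measure_Ioo
      _ ≤ ENNReal.ofReal K := by
          apply ENNReal.ofReal_le_ofReal; rw [he0]; linarith

theorem statement1
    {X : Type*} [NormedAddCommGroup X] [InnerProductSpace ℝ X] [CompleteSpace X]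
    {Y : Type*} [NormedAddCommGroup Y] [InnerProductSpace ℝ Y] [CompleteSpace Y]
    (L : X →L[ℝ] Y) (y : Y) (xdag : X)
    (hsol : L xdag = y) (hmin : ∀ x : X, L x = y → ‖xdag‖ ≤ ‖x‖)
    (r : ℝ → ℝ → ℝ) (ρ ρt : ℝ) (hρ0 : 0 < ρ) (hρ1 : ρ < 1) (hρt0 : 0 < ρt) (hρt1 : ρt < 1)
    (hrcont : ∀ α > (0:ℝ), ContinuousOn (r α) (Set.Ici 0))
    (hrnonneg : ∀ α > (0:ℝ), ∀ t ∈ Set.Ici (0:ℝ), 0 ≤ r α t)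
    (hrbound : ∀ α > (0:ℝ), ∀ t > (0:ℝ), r α t ≤ min (1 / t) (ρ / Real.sqrt (α * t)))
    (hrt_anti : ∀ α > (0:ℝ), AntitoneOn (fun t => (1 - t * r α t) ^ 2) (Set.Ici 0))
    (hrt_cont : ∀ t ∈ Set.Ici (0:ℝ), ContinuousOn (fun α => (1 - t * r α t) ^ 2) (Set.Ioi 0))
    (hrt_mono : ∀ t ∈ Set.Ici (0:ℝ), MonotoneOn (fun α => (1 - t * r α t) ^ 2) (Set.Ioi 0))
    (hrt_lt : ∀ α > (0:ℝ), (1 - α * r α α) ^ 2 < ρt)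
    (e : StieltjesFunction ℝ) (he0 : e 0 = 0)
    (he_const : ∀ t : ℝ, ‖L‖ ^ 2 ≤ t → e t = e (‖L‖ ^ 2))
    (xa : ℝ → X)
    (hint : ∀ α > (0:ℝ),
      ‖xa α - xdag‖ ^ 2 = ∫ t in Set.Ioc (0:ℝ) (‖L‖ ^ 2), (1 - t * r α t) ^ 2 ∂e.measure)
    (hL : L ≠ 0)
    (he_norm : e (‖L‖ ^ 2) = ‖xdag‖ ^ 2)
    (φ : ℝ → ℝ) (hφmono : ∀ s t : ℝ, 0 < s → s ≤ t → φ s ≤ φ t)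
    (hφpos : ∀ t > (0:ℝ), 0 < φ t)
    (μ A : ℝ) (hμ0 : 0 < μ) (hμ1 : μ < 1) (hA : 0 < A)
    (hqual : ∀ α > (0:ℝ), ∀ t > (0:ℝ), φ t * ((1 - t * r α t) ^ 2) ^ μ ≤ A * φ α)
    (Ct : ℝ) (hCt : 0 < Ct)
    (hdecay : ∀ t > (0:ℝ), e t ≤ Ct * φ t) :
    ∃ C : ℝ, 0 < C ∧
      C = A ^ (1 / μ) / φ (‖L‖ ^ 2) * ‖xdag‖ ^ 2 + Ct + A * Ct * ρt ^ (1 - μ) / (1 - μ) ∧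
      ∀ α > (0:ℝ), ‖xa α - xdag‖ ^ 2 ≤ C * φ α := by
  have hbpos : (0:ℝ) < ‖L‖ ^ 2 := by
    have : ‖L‖ ≠ 0 := norm_ne_zero_iff.mpr hL
    positivity
  set b : ℝ := ‖L‖ ^ 2 with hbdef
  have hφb : 0 < φ b := hφpos b hbpos
  have hμ1' : (0:ℝ) < 1 - μ := by linarith
  set C : ℝ := A ^ (1 / μ) / φ b * ‖xdag‖ ^ 2 + Ct + A * Ct * ρt ^ (1 - μ) / (1 - μ) with hCdef
  have hT1 : 0 ≤ A ^ (1 / μ) / φ b * ‖xdag‖ ^ 2 := by positivity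
  have hT3 : 0 < A * Ct * ρt ^ (1 - μ) / (1 - μ) := by positivity
  refine ⟨C, by positivity, rfl, ?_⟩
  intro α hα
  rw [hint α hα]
  set f : ℝ → ℝ := fun t => (1 - t * r α t) ^ 2 with hfdef
  show (∫ t in Set.Ioc (0:ℝ) b, f t ∂e.measure) ≤ C * φ α
  -- basic facts about f
  have hf0 : ∀ t, 0 ≤ f t := fun t => sq_nonneg _
  have hf1 : ∀ t > (0:ℝ), f t ≤ 1 := by
    intro t ht
    have h1 : r α t ≤ 1 / t := le_trans (hrbound α hα t ht) (min_le_left _ _)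
    have h2 : 0 ≤ r α t := hrnonneg α hα t ht.le
    have h3 : t * r α t ≤ 1 := by
      calc t * r α t ≤ t * (1 / t) := by nlinarith
        _ = 1 := by field_simp
    have h4 : 0 ≤ t * r α t := by positivity
    simp only [hfdef]
    nlinarith
  have hfcont : ContinuousOn f (Set.Ici 0) := by
    apply ContinuousOn.pow
    exact continuousOn_const.sub (continuousOn_id.mul (hrcont α hα))
  have hIci : ∀ c d : ℝ, 0 ≤ c → Set.Ioc c d ⊆ Set.Ici (0:ℝ) :=
    fun c d hc x hx => le_of_lt (lt_of_le_of_lt hc hx.1)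
  have hmeasf : ∀ c d : ℝ, 0 ≤ c →
      AEStronglyMeasurable f (e.measure.restrict (Set.Ioc c d)) := by
    intro c d hc
    exact (hfcont.mono (hIci c d hc)).aestronglyMeasurable measurableSet_Ioc
  have hintf : ∀ c d : ℝ, 0 ≤ c → IntegrableOn f (Set.Ioc c d) e.measure := by
    intro c d hc
    refine ⟨hmeasf c d hc, HasFiniteIntegral.restrict_of_bounded (C := 1) ?_ ?_⟩
    · rw [e.measure_Ioc]; exact ENNReal.ofReal_lt_top
    · filter_upwards [ae_restrict_mem measurableSet_Ioc] with t ht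
      rw [Real.norm_eq_abs, abs_of_nonneg (hf0 t)]
      exact hf1 t (lt_of_le_of_lt hc ht.1)
  -- bound: ∫ over Ioc c d with 0 ≤ c of f is at most e d - e c
  have hpiece : ∀ c d : ℝ, 0 ≤ c → c ≤ d →
      (∫ t in Set.Ioc c d, f t ∂e.measure) ≤ e d - e c := by
    intro c d hc hcd
    have h1 : (∫ t in Set.Ioc c d, f t ∂e.measure) ≤ ∫ _t in Set.Ioc c d, (1:ℝ) ∂e.measure := by
      apply setIntegral_mono_on (hintf c d hc) ((integrableOn_const_iff (by simp)).mpr ?_) measurableSet_Ioc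
      · intro t ht
        exact hf1 t (lt_of_le_of_lt hc ht.1)
      · right; rw [e.measure_Ioc]; exact ENNReal.ofReal_lt_top
    have h2 : (∫ _t in Set.Ioc c d, (1:ℝ) ∂e.measure) = e d - e c := by
      rw [setIntegral_const, smul_eq_mul, mul_one, measureReal_def, e.measure_Ioc,
        ENNReal.toReal_ofReal (by have := e.mono hcd; linarith)]
    calc _ ≤ _ := h1
      _ = e d - e c := h2
  by_cases hab : b ≤ α
  · -- easy case
    have := hpiece 0 b le_rfl hbpos.le
    have h3 : e b ≤ Ct * φ b := hdecay b hbpos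
    have h4 : φ b ≤ φ α := hφmono b α hbpos hab
    have hφα := hφpos α hα
    rw [he0] at this
    have hCge : Ct ≤ C := by rw [hCdef]; linarith [hT1, hT3]
    have h4' : Ct * φ b ≤ Ct * φ α := mul_le_mul_of_nonneg_left h4 hCt.le
    refine le_trans this ?_
    calc e b - 0 = e b := by ring
      _ ≤ Ct * φ b := h3
      _ ≤ Ct * φ α := h4'
      _ ≤ C * φ α := mul_le_mul_of_nonneg_right hCge hφα.le
  · push_neg at hab
    -- split the integral
    have hsplit : (∫ t in Set.Ioc 0 b, f t ∂e.measure)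
        = (∫ t in Set.Ioc 0 α, f t ∂e.measure) + (∫ t in Set.Ioc α b, f t ∂e.measure) := by
      rw [← setIntegral_union (Set.Ioc_disjoint_Ioc_of_le le_rfl) measurableSet_Ioc
        (hintf 0 α le_rfl) (hintf α b hα.le), Set.Ioc_union_Ioc_eq_Ioc hα.le hab.le]
    have hp1 : (∫ t in Set.Ioc 0 α, f t ∂e.measure) ≤ Ct * φ α := by
      have := hpiece 0 α le_rfl hα.le
      have h3 := hdecay α hα
      rw [he0] at this; linarith
    have hp2 : (∫ t in Set.Ioc α b, f t ∂e.measure)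
        ≤ A * Ct * ρt ^ (1 - μ) / (1 - μ) * φ α := by
      set ν := e.measure.restrict (Set.Ioc α b) with hν
      set c : ℝ := Ct * (A * φ α) with hc
      have hφα' := hφpos α hα
      have hc0 : 0 ≤ c := by positivity
      have hmeas : AEStronglyMeasurable f ν := hmeasf α b hα.le
      have h1 : (∫ t in Set.Ioc α b, f t ∂e.measure)
          = (∫⁻ t, ENNReal.ofReal (f t) ∂ν).toReal :=
        integral_eq_lintegral_of_nonneg_ae (Eventually.of_forall hf0) hmeas
      have h2 : (∫⁻ t, ENNReal.ofReal (f t) ∂ν)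
          = ∫⁻ s in Set.Ioi (0:ℝ), ν {a | s < f a} :=
        lintegral_eq_lintegral_meas_lt ν (Eventually.of_forall hf0) hmeas.aemeasurable
      have hbound : ∀ s ∈ Set.Ioi (0:ℝ), ν {a | s < f a}
          ≤ Set.indicator (Set.Ioo 0 ρt)
            (fun s => ENNReal.ofReal (c * s ^ (-μ))) s := by
        intro s hs
        have hs0 : (0:ℝ) < s := hs
        rw [hν, Measure.restrict_apply' measurableSet_Ioc]
        by_cases hsρ : s < ρt
        · rw [Set.indicator_of_mem (show s ∈ Set.Ioo (0:ℝ) ρt from ⟨hs0, hsρ⟩)]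
          apply stieltjes_measure_le he0 (b := b) (by positivity)
          · rintro t ⟨ht1, ht2⟩
            exact ⟨lt_trans hα ht2.1, ht2.2⟩
          · rintro t ⟨ht1, ht2⟩
            have htpos : 0 < t := lt_trans hα ht2.1
            have hq := hqual α hα t htpos
            have hsμ : (0:ℝ) < s ^ μ := Real.rpow_pos_of_pos hs0 μ
            have hmono : s ^ μ ≤ f t ^ μ :=
              Real.rpow_le_rpow hs0.le (le_of_lt ht1) hμ0.le
            have hφt : 0 < φ t := hφpos t htpos
            have hfm : φ t * s ^ μ ≤ A * φ α := by
              calc φ t * s ^ μ ≤ φ t * f t ^ μ :=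
                    mul_le_mul_of_nonneg_left hmono hφt.le
                _ ≤ A * φ α := hq
            have hφle : φ t ≤ A * φ α / s ^ μ := (le_div_iff₀ hsμ).mpr hfm
            have : e t ≤ Ct * (A * φ α / s ^ μ) :=
              le_trans (hdecay t htpos) (mul_le_mul_of_nonneg_left hφle hCt.le)
            calc e t ≤ Ct * (A * φ α / s ^ μ) := this
              _ = c * s ^ (-μ) := by
                  rw [Real.rpow_neg hs0.le]
                  field_simp [hc]
                  linear_combination hc.symm
        · rw [Set.indicator_of_notMem (by simp [hsρ, Set.mem_Ioo])]
          have hempty : {a | s < f a} ∩ Set.Ioc α b = ∅ := by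
            rw [Set.eq_empty_iff_forall_notMem]
            rintro t ⟨ht1, ht2⟩
            have hfα : f t ≤ f α :=
              hrt_anti α hα hα.le (le_trans hα.le ht2.1.le) ht2.1.le
            have : f α < ρt := hrt_lt α hα
            push_neg at hsρ
            have : s < f t := ht1
            linarith
          rw [hempty]; simp
      have hmeasg : Measurable (Set.indicator (Set.Ioo (0:ℝ) ρt)
          (fun s => ENNReal.ofReal (c * s ^ (-μ)))) := by
        apply Measurable.indicator _ measurableSet_Ioo
        exact (measurable_const.mul (measurable_id.pow_const _)).ennreal_ofReal
      have h3 : (∫⁻ s in Set.Ioi (0:ℝ), ν {a | s < f a})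
          ≤ ∫⁻ s in Set.Ioi (0:ℝ), Set.indicator (Set.Ioo 0 ρt)
            (fun s => ENNReal.ofReal (c * s ^ (-μ))) s :=
        setLIntegral_mono hmeasg hbound
      have h4 : (∫⁻ s in Set.Ioi (0:ℝ), Set.indicator (Set.Ioo 0 ρt)
            (fun s => ENNReal.ofReal (c * s ^ (-μ))) s)
          = ∫⁻ s in Set.Ioo (0:ℝ) ρt, ENNReal.ofReal (c * s ^ (-μ)) := by
        rw [lintegral_indicator measurableSet_Ioo,
          Measure.restrict_restrict measurableSet_Ioo]
        have hIooIoi : Set.Ioo (0:ℝ) ρt ∩ Set.Ioi 0 = Set.Ioo 0 ρt :=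
          Set.inter_eq_left.mpr (fun x (hx : x ∈ Set.Ioo (0:ℝ) ρt) => hx.1)
        rw [hIooIoi]
      have h5 : IntegrableOn (fun s => c * s ^ (-μ)) (Set.Ioo (0:ℝ) ρt) := by
        have := (intervalIntegral.intervalIntegrable_rpow'
          (show (-1:ℝ) < -μ by linarith)).const_mul c (a := 0) (b := ρt)
        rw [intervalIntegrable_iff_integrableOn_Ioc_of_le hρt0.le] at this
        exact this.mono_set Set.Ioo_subset_Ioc_self
      have h6 : (∫ s in Set.Ioo (0:ℝ) ρt, c * s ^ (-μ))
          = c * (ρt ^ (1 - μ) / (1 - μ)) := by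
        rw [← integral_Ioc_eq_integral_Ioo,
          ← intervalIntegral.integral_of_le hρt0.le,
          intervalIntegral.integral_const_mul,
          integral_rpow (Or.inl (show (-1:ℝ) < -μ by linarith)),
          Real.zero_rpow (show -μ + 1 ≠ 0 by intro h; linarith)]
        ring_nf
      have h7 : (∫⁻ s in Set.Ioo (0:ℝ) ρt, ENNReal.ofReal (c * s ^ (-μ)))
          = ENNReal.ofReal (c * (ρt ^ (1 - μ) / (1 - μ))) := by
        rw [← h6]
        refine (ofReal_integral_eq_lintegral_ofReal h5 ?_).symm
        filter_upwards [ae_restrict_mem measurableSet_Ioo] with s hs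
        have : (0:ℝ) ≤ s ^ (-μ) := Real.rpow_nonneg hs.1.le _
        positivity
      rw [h1]
      have hle : (∫⁻ t, ENNReal.ofReal (f t) ∂ν)
          ≤ ENNReal.ofReal (c * (ρt ^ (1 - μ) / (1 - μ))) := by
        rw [h2, ← h7, ← h4]; exact h3
      have := ENNReal.toReal_le_of_le_ofReal (by positivity) hle
      calc (∫⁻ t, ENNReal.ofReal (f t) ∂ν).toReal
          ≤ c * (ρt ^ (1 - μ) / (1 - μ)) := this
        _ = A * Ct * ρt ^ (1 - μ) / (1 - μ) * φ α := by rw [hc]; ring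
    have hφα := hφpos α hα
    rw [hsplit]
    have hCge : Ct + A * Ct * ρt ^ (1 - μ) / (1 - μ) ≤ C := by rw [hCdef]; linarith [hT1]
    calc (∫ t in Set.Ioc 0 α, f t ∂e.measure) + (∫ t in Set.Ioc α b, f t ∂e.measure)
        ≤ Ct * φ α + A * Ct * ρt ^ (1 - μ) / (1 - μ) * φ α := add_le_add hp1 hp2
      _ = (Ct + A * Ct * ρt ^ (1 - μ) / (1 - μ)) * φ α := by ring
      _ ≤ C * φ α := mul_le_mul_of_nonneg_right hCge hφα.le
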